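/- Let X be a nonempty set and let 𝒟 be an algebra of bounded real-valued functions on X that is stable under normal contractions and contains a strictly positive function χ (χ(x) > 0 for all x ∈ X). Let σ(𝒟) be the smallest σ-algebra on X with respect to which every member of 𝒟 is measurable, and let m be a finite measure on σ(𝒟). Then the set of m-classes of members of 𝒟 is dense in L²(X,σ(𝒟),m). -/

import Mathlib

open Filter Topology MeasureTheory

/-- A normal contraction: `F 0 = 0` and `F` is 1-Lipschitz. -/
def NormalContraction (F : ℝ → ℝ) : Prop :=
  F 0 = 0 ∧ ∀ x y : ℝ, |F x - F y| ≤ |x - y|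

/-! ### Auxiliary material -/

/-- The clamp function to `[0,1]`. -/
noncomputable def clampPf : ℝ → ℝ := fun t => max 0 (min t 1)

lemma clampPf_zero : clampPf 0 = 0 := by simp [clampPf]

lemma clampPf_one : clampPf 1 = 1 := by norm_num [clampPf]

lemma clampPf_of_one_le {t : ℝ} (h : 1 ≤ t) : clampPf t = 1 := by
  rw [clampPf, min_eq_right h, max_eq_right zero_le_one]

lemma clampPf_abs_le (t : ℝ) : |clampPf t| ≤ 1 :=
  abs_le.mpr ⟨le_trans (by norm_num) (le_max_left 0 (min t 1)),
    max_le zero_le_one (min_le_right t 1)⟩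

lemma clampPf_cont : Continuous clampPf :=
  continuous_const.max (continuous_id.min continuous_const)

lemma clampPf_nc : NormalContraction clampPf := by
  refine ⟨clampPf_zero, fun x y => ?_⟩
  show |max 0 (min x 1) - max 0 (min y 1)| ≤ |x - y|
  refine (abs_max_sub_max_le_max 0 (min x 1) 0 (min y 1)).trans ?_
  rw [sub_self, abs_zero]
  refine max_le (abs_nonneg _) ?_
  refine (abs_min_sub_min_le_max x 1 y 1).trans ?_
  rw [sub_self, abs_zero]
  exact max_le le_rfl (abs_nonneg _)

lemma min_nc {b : ℝ} (hb : 0 ≤ b) : NormalContraction (fun t => min t b) := by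
  refine ⟨min_eq_left hb, fun x y => ?_⟩
  show |min x b - min y b| ≤ |x - y|
  refine (abs_min_sub_min_le_max x b y b).trans ?_
  rw [sub_self, abs_zero]
  exact max_le le_rfl (abs_nonneg _)

lemma eventually_one_div_le {c : ℝ} (hc : 0 < c) :
    ∀ᶠ n : ℕ in atTop, 1 / ((n : ℝ) + 1) ≤ c := by
  obtain ⟨N, hN⟩ := exists_nat_gt (1 / c)
  filter_upwards [eventually_ge_atTop N] with n hn
  have h1 : (0 : ℝ) < (n : ℝ) + 1 := by positivity
  have h2 : 1 / c < (n : ℝ) + 1 :=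
    lt_of_lt_of_le hN (le_trans (Nat.cast_le.mpr hn) (by linarith))
  rw [div_le_iff₀ h1]
  rw [div_lt_iff₀ hc] at h2
  nlinarith

/-- The real indicator function of a set, with value 1. -/
noncomputable def indOne {X : Type*} (A : Set X) : X → ℝ := A.indicator fun _ => 1

lemma indOne_of_mem {X : Type*} {A : Set X} {x : X} (h : x ∈ A) : indOne A x = 1 :=
  Set.indicator_of_mem h _

lemma indOne_of_not_mem {X : Type*} {A : Set X} {x : X} (h : x ∉ A) : indOne A x = 0 :=
  Set.indicator_of_notMem h _

lemma indOne_abs_le {X : Type*} (A : Set X) (x : X) : |indOne A x| ≤ 1 := by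
  by_cases h : x ∈ A
  · rw [indOne_of_mem h]; norm_num
  · rw [indOne_of_not_mem h]; norm_num

/-- A set is approximable by a uniformly bounded sequence from `𝒟`. -/
def AppSeq {X : Type*} (𝒟 : Set (X → ℝ)) (A : Set X) : Prop :=
  ∃ g : ℕ → X → ℝ, (∀ n, g n ∈ 𝒟) ∧ (∀ n x, |g n x| ≤ 1) ∧
    ∀ x, Tendsto (fun n => g n x) atTop (𝓝 (indOne A x))

section AppSeqLemmas

variable {X : Type*} (𝒟 : Set (X → ℝ))
variable (hadd : ∀ f ∈ 𝒟, ∀ g ∈ 𝒟, f + g ∈ 𝒟)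
variable (hsmul : ∀ c : ℝ, ∀ f ∈ 𝒟, c • f ∈ 𝒟)
variable (hmul : ∀ f ∈ 𝒟, ∀ g ∈ 𝒟, f * g ∈ 𝒟)
variable (hnc : ∀ F : ℝ → ℝ, NormalContraction F → ∀ f ∈ 𝒟, F ∘ f ∈ 𝒟)

include hadd hsmul in
lemma sub_mem_of {f g : X → ℝ} (hf : f ∈ 𝒟) (hg : g ∈ 𝒟) : f - g ∈ 𝒟 := by
  have h := hadd f hf ((-1 : ℝ) • g) (hsmul (-1) g hg)
  have heq : f - g = f + (-1 : ℝ) • g := by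
    funext x; simp [sub_eq_add_neg]
  rw [heq]; exact h

include hadd hsmul hnc in
lemma ramp_mem {f : X → ℝ} (hf : f ∈ 𝒟) {b c : ℝ} (hb : 0 ≤ b) (hc : 0 ≤ c) (k : ℝ) :
    (fun x => clampPf (k * (min (f x) b - min (f x) c))) ∈ 𝒟 := by
  have h1 : (fun x => min (f x) b) ∈ 𝒟 := hnc _ (min_nc hb) f hf
  have h2 : (fun x => min (f x) c) ∈ 𝒟 := hnc _ (min_nc hc) f hf
  have h3 : ((fun x => min (f x) b) - fun x => min (f x) c) ∈ 𝒟 :=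
    sub_mem_of 𝒟 hadd hsmul h1 h2
  have h4 := hsmul k _ h3
  have h5 := hnc _ clampPf_nc _ h4
  exact h5

include hadd hsmul hnc in
lemma appSeq_Ioi {f : X → ℝ} (hf : f ∈ 𝒟) {a : ℝ} (ha : 0 ≤ a) :
    AppSeq 𝒟 (f ⁻¹' Set.Ioi a) := by
  refine ⟨fun n x => clampPf (((n : ℝ) + 1) * (min (f x) (a + 1 / ((n : ℝ) + 1)) - min (f x) a)),
    fun n => ramp_mem 𝒟 hadd hsmul hnc hf (by positivity) ha _,
    fun n x => clampPf_abs_le _, fun x => ?_⟩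
  by_cases hx : x ∈ f ⁻¹' Set.Ioi a
  · rw [indOne_of_mem hx]
    have hfx : a < f x := hx
    apply tendsto_nhds_of_eventually_eq
    filter_upwards [eventually_one_div_le (sub_pos.mpr hfx)] with n hn
    beta_reduce
    have h1 : min (f x) (a + 1 / ((n : ℝ) + 1)) = a + 1 / ((n : ℝ) + 1) :=
      min_eq_right (by linarith)
    have h2 : min (f x) a = a := min_eq_right hfx.le
    rw [h1, h2]
    have hne : ((n : ℝ) + 1) ≠ 0 := by positivity
    have h3 : ((n : ℝ) + 1) * (a + 1 / ((n : ℝ) + 1) - a) = 1 := by field_simp <;> ring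
    rw [h3, clampPf_one]
  · rw [indOne_of_not_mem hx]
    have hfx : f x ≤ a := not_lt.mp (by simpa using hx)
    apply tendsto_nhds_of_eventually_eq
    apply Eventually.of_forall; intro n
    beta_reduce
    have h0 : (0 : ℝ) ≤ 1 / ((n : ℝ) + 1) := by positivity
    have h1 : min (f x) (a + 1 / ((n : ℝ) + 1)) = f x := min_eq_left (by linarith)
    have h2 : min (f x) a = f x := min_eq_left hfx
    rw [h1, h2, sub_self, mul_zero, clampPf_zero]

include hadd hsmul hnc in
lemma appSeq_Ici {f : X → ℝ} (hf : f ∈ 𝒟) {b : ℝ} (hb : 0 < b) :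
    AppSeq 𝒟 (f ⁻¹' Set.Ici b) := by
  refine ⟨fun n x => clampPf (((n : ℝ) + 1) *
      (min (f x) b - min (f x) (b - min (1 / ((n : ℝ) + 1)) b))),
    fun n => ramp_mem 𝒟 hadd hsmul hnc hf hb.le
      (sub_nonneg.mpr (min_le_right _ _)) _,
    fun n x => clampPf_abs_le _, fun x => ?_⟩
  by_cases hx : x ∈ f ⁻¹' Set.Ici b
  · rw [indOne_of_mem hx]
    have hfx : b ≤ f x := hx
    apply tendsto_nhds_of_eventually_eq
    filter_upwards [eventually_one_div_le hb] with n hn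
    beta_reduce
    have h0 : (0 : ℝ) ≤ min (1 / ((n : ℝ) + 1)) b := le_min (by positivity) hb.le
    have hmineq : min (1 / ((n : ℝ) + 1)) b = 1 / ((n : ℝ) + 1) := min_eq_left hn
    have h1 : min (f x) b = b := min_eq_right hfx
    have h2 : min (f x) (b - min (1 / ((n : ℝ) + 1)) b) = b - min (1 / ((n : ℝ) + 1)) b :=
      min_eq_right (by linarith)
    rw [h1, h2, hmineq]
    have hne : ((n : ℝ) + 1) ≠ 0 := by positivity
    have h3 : ((n : ℝ) + 1) * (b - (b - 1 / ((n : ℝ) + 1))) = 1 := by field_simp <;> ring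
    rw [h3, clampPf_one]
  · rw [indOne_of_not_mem hx]
    have hfx : f x < b := not_le.mp (by simpa using hx)
    apply tendsto_nhds_of_eventually_eq
    filter_upwards [eventually_one_div_le (sub_pos.mpr hfx)] with n hn
    beta_reduce
    have hminle : min (1 / ((n : ℝ) + 1)) b ≤ 1 / ((n : ℝ) + 1) := min_le_left _ _
    have h1 : min (f x) b = f x := min_eq_left hfx.le
    have h2 : min (f x) (b - min (1 / ((n : ℝ) + 1)) b) = f x := min_eq_left (by linarith)
    rw [h1, h2, sub_self, mul_zero, clampPf_zero]

include hmul in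
lemma appSeq_inter {A B : Set X} (hA : AppSeq 𝒟 A) (hB : AppSeq 𝒟 B) :
    AppSeq 𝒟 (A ∩ B) := by
  obtain ⟨g, hgD, hgb, hgt⟩ := hA
  obtain ⟨k, hkD, hkb, hkt⟩ := hB
  refine ⟨fun n => g n * k n, fun n => hmul _ (hgD n) _ (hkD n), fun n x => ?_, fun x => ?_⟩
  · beta_reduce
    rw [Pi.mul_apply, abs_mul]
    nlinarith [hgb n x, hkb n x, abs_nonneg (g n x), abs_nonneg (k n x)]
  · have h1 : Tendsto (fun n => g n x * k n x) atTop (𝓝 (indOne A x * indOne B x)) :=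
      (hgt x).mul (hkt x)
    have h2 : indOne A x * indOne B x = indOne (A ∩ B) x := by
      by_cases hxA : x ∈ A <;> by_cases hxB : x ∈ B
      · rw [indOne_of_mem hxA, indOne_of_mem hxB,
          indOne_of_mem (Set.mem_inter hxA hxB)]; norm_num
      · rw [indOne_of_mem hxA, indOne_of_not_mem hxB,
          indOne_of_not_mem (fun h => hxB (Set.mem_of_mem_inter_right h))]; norm_num
      · rw [indOne_of_not_mem hxA, indOne_of_mem hxB,
          indOne_of_not_mem (fun h => hxA (Set.mem_of_mem_inter_left h))]; norm_num
      · rw [indOne_of_not_mem hxA, indOne_of_not_mem hxB,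
          indOne_of_not_mem (fun h => hxA (Set.mem_of_mem_inter_left h))]; norm_num
    rw [h2] at h1
    exact h1

variable {χ : X → ℝ} (hχ : χ ∈ 𝒟) (hχpos : ∀ x, 0 < χ x)

include hχpos in
lemma appSeq_chi_tendsto (x : X) :
    Tendsto (fun n : ℕ => clampPf (((n : ℝ) + 1) * χ x)) atTop (𝓝 1) := by
  apply tendsto_nhds_of_eventually_eq
  filter_upwards [eventually_one_div_le (hχpos x)] with n hn
  apply clampPf_of_one_le
  rw [div_le_iff₀ (by positivity : (0 : ℝ) < (n : ℝ) + 1)] at hn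
  nlinarith

include hsmul hnc hχ in
lemma appSeq_chi_mem (n : ℕ) : (fun x => clampPf (((n : ℝ) + 1) * χ x)) ∈ 𝒟 :=
  hnc _ clampPf_nc _ (hsmul ((n : ℝ) + 1) χ hχ)

include hsmul hnc hχ hχpos in
lemma appSeq_univ : AppSeq 𝒟 (Set.univ : Set X) := by
  refine ⟨fun n x => clampPf (((n : ℝ) + 1) * χ x),
    fun n => appSeq_chi_mem 𝒟 hsmul hnc hχ n,
    fun n x => clampPf_abs_le _, fun x => ?_⟩
  rw [indOne_of_mem (Set.mem_univ x)]
  exact appSeq_chi_tendsto hχpos x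

include hadd hsmul hnc hχ hχpos in
lemma appSeq_compl {A : Set X} (hA : AppSeq 𝒟 A) : AppSeq 𝒟 Aᶜ := by
  obtain ⟨g, hgD, hgb, hgt⟩ := hA
  refine ⟨fun n x => clampPf (clampPf (((n : ℝ) + 1) * χ x) - g n x), fun n => ?_,
    fun n x => clampPf_abs_le _, fun x => ?_⟩
  · have h1 := appSeq_chi_mem 𝒟 hsmul hnc hχ n
    have h2 := sub_mem_of 𝒟 hadd hsmul h1 (hgD n)
    exact hnc _ clampPf_nc _ h2
  · beta_reduce
    have h1 := appSeq_chi_tendsto hχpos x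
    have h2 : Tendsto (fun n : ℕ => clampPf (((n : ℝ) + 1) * χ x) - g n x) atTop
        (𝓝 (1 - indOne A x)) := h1.sub (hgt x)
    have h3 := (clampPf_cont.tendsto _).comp h2
    have h4 : clampPf (1 - indOne A x) = indOne Aᶜ x := by
      by_cases hx : x ∈ A
      · rw [indOne_of_mem hx, indOne_of_not_mem (by simpa using hx), sub_self, clampPf_zero]
      · rw [indOne_of_not_mem hx, indOne_of_mem (Set.mem_compl hx), sub_zero, clampPf_one]
    rw [← h4]
    exact h3

end AppSeqLemmas

/-- Bounded a.e. convergence implies `L²` convergence (finite measure). -/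
lemma tendsto_toLp_of_bdd {X : Type*} [MeasurableSpace X] {m : Measure X} [IsFiniteMeasure m]
    {g : ℕ → X → ℝ} {h : X → ℝ} (hgm : ∀ n, MemLp (g n) 2 m) (hh : MemLp h 2 m)
    (hb : ∀ n x, |g n x| ≤ 1) (ht : ∀ x, Tendsto (fun n => g n x) atTop (𝓝 (h x))) :
    Tendsto (fun n => (hgm n).toLp (g n)) atTop (𝓝 (hh.toLp h)) := by
  rw [Lp.tendsto_Lp_iff_tendsto_eLpNorm'' _ hgm h hh]
  have hui : UnifIntegrable g 2 m := by
    intro ε hε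
    obtain ⟨δ, hδ, hδ'⟩ := unifIntegrable_const (μ := m) (ι := ℕ)
      (g := fun _ : X => (1 : ℝ)) one_le_two ENNReal.ofNat_ne_top (memLp_const 1) hε
    refine ⟨δ, hδ, fun n s hs hμs => le_trans (eLpNorm_mono fun x => ?_) (hδ' n s hs hμs)⟩
    by_cases hx : x ∈ s
    · rw [Set.indicator_of_mem hx, Set.indicator_of_mem hx, Real.norm_eq_abs,
        Real.norm_eq_abs]
      simpa using hb n x
    · rw [Set.indicator_of_notMem hx, Set.indicator_of_notMem hx]
  exact tendsto_Lp_finite_of_tendsto_ae one_le_two ENNReal.ofNat_ne_top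
    (fun n => (hgm n).1) hh hui (ae_of_all _ ht)

/-- Theorem: if `𝒟` is an algebra of bounded real-valued functions, stable under normal
contractions and containing a strictly positive function `χ`, if `X` carries the
σ-algebra `σ(𝒟)` generated by `𝒟`, and if `m` is a finite measure on it, then the
`m`-classes of members of `𝒟` are dense in `L²(X,σ(𝒟),m)`. -/
theorem statement_15 {X : Type*} [Nonempty X] [mX : MeasurableSpace X]
    (𝒟 : Set (X → ℝ))
    (hσ : mX = ⨆ f ∈ 𝒟, MeasurableSpace.comap f (inferInstance : MeasurableSpace ℝ))
    (hbdd : ∀ f ∈ 𝒟, ∃ C : ℝ, ∀ x, |f x| ≤ C)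
    (hadd : ∀ f ∈ 𝒟, ∀ g ∈ 𝒟, f + g ∈ 𝒟)
    (hsmul : ∀ c : ℝ, ∀ f ∈ 𝒟, c • f ∈ 𝒟)
    (hmul : ∀ f ∈ 𝒟, ∀ g ∈ 𝒟, f * g ∈ 𝒟)
    (hnc : ∀ F : ℝ → ℝ, NormalContraction F → ∀ f ∈ 𝒟, F ∘ f ∈ 𝒟)
    (χ : X → ℝ) (hχ : χ ∈ 𝒟) (hχpos : ∀ x, 0 < χ x)
    (m : Measure X) [IsFiniteMeasure m] :
    Dense {u : Lp ℝ 2 m | ∃ f ∈ 𝒟, (⇑u : X → ℝ) =ᵐ[m] f} := by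
  classical
  -- measurability of members of 𝒟
  have hmeas : ∀ f ∈ 𝒟, Measurable f := by
    intro f hf
    rw [measurable_iff_comap_le, hσ]
    exact le_biSup (fun g => MeasurableSpace.comap g (inferInstance : MeasurableSpace ℝ)) hf
  -- members of 𝒟 are in L²
  have hmem2 : ∀ f ∈ 𝒟, MemLp f 2 m := by
    intro f hf
    obtain ⟨C, hC⟩ := hbdd f hf
    exact MemLp.of_bound ((hmeas f hf).aestronglyMeasurable) C
      (ae_of_all _ fun x => by rw [Real.norm_eq_abs]; exact hC x)
  -- indicators of measurable sets are in L²
  have hindm : ∀ (A : Set X), MeasurableSet A → MemLp (indOne A) 2 m := by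
    intro A hA
    refine MemLp.of_bound ((measurable_const.indicator hA).aestronglyMeasurable) 1
      (ae_of_all _ fun x => ?_)
    rw [Real.norm_eq_abs]
    exact indOne_abs_le A x
  -- the submodule of classes of members of 𝒟
  let S : Submodule ℝ (Lp ℝ 2 m) :=
    { carrier := {u : Lp ℝ 2 m | ∃ f ∈ 𝒟, (⇑u : X → ℝ) =ᵐ[m] f}
      add_mem' := by
        rintro u v ⟨f, hf, hu⟩ ⟨g, hg, hv⟩
        refine ⟨f + g, hadd f hf g hg, ?_⟩
        filter_upwards [Lp.coeFn_add u v, hu, hv] with x h1 h2 h3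
        rw [h1, Pi.add_apply, Pi.add_apply, h2, h3]
      zero_mem' := by
        refine ⟨(0 : ℝ) • χ, hsmul 0 χ hχ, ?_⟩
        filter_upwards [Lp.coeFn_zero ℝ 2 m] with x h1
        rw [h1, Pi.zero_apply, Pi.smul_apply, zero_smul]
      smul_mem' := by
        rintro c u ⟨f, hf, hu⟩
        refine ⟨c • f, hsmul c f hf, ?_⟩
        filter_upwards [Lp.coeFn_smul c u, hu] with x h1 h2
        rw [h1, Pi.smul_apply, Pi.smul_apply, h2] }
  -- approximable sets give elements of the closure
  have happT : ∀ (A : Set X) (hA : MeasurableSet A), AppSeq 𝒟 A →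
      (hindm A hA).toLp (indOne A) ∈ S.topologicalClosure := by
    rintro A hA ⟨g, hgD, hgb, hgt⟩
    have hgm : ∀ n, MemLp (g n) 2 m := fun n => hmem2 _ (hgD n)
    have htd := tendsto_toLp_of_bdd hgm (hindm A hA) hgb hgt
    refine (S.isClosed_topologicalClosure).mem_of_tendsto htd
      (Eventually.of_forall fun n => ?_)
    exact S.le_topologicalClosure ⟨g n, hgD n, (hgm n).coeFn_toLp⟩
  -- the generating π-system
  set s0 : Set (Set X) := {A : Set X | ∃ f ∈ 𝒟, ∃ a : ℝ, A = f ⁻¹' Set.Ioi a} with hs0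
  have hℝ : (inferInstance : MeasurableSpace ℝ) =
      MeasurableSpace.generateFrom (Set.range Set.Ioi) := by
    rw [BorelSpace.measurable_eq (α := ℝ), borel_eq_generateFrom_Ioi]
  have hgen0 : mX = MeasurableSpace.generateFrom s0 := by
    refine le_antisymm ?_ (MeasurableSpace.generateFrom_le ?_)
    · rw [hσ]
      refine iSup_le fun f => iSup_le fun hf => ?_
      rw [hℝ, MeasurableSpace.comap_generateFrom]
      refine MeasurableSpace.generateFrom_le ?_
      rintro t ⟨u, ⟨a, rfl⟩, rfl⟩
      exact MeasurableSpace.measurableSet_generateFrom ⟨f, hf, a, rfl⟩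
    · rintro t ⟨f, hf, a, rfl⟩
      exact hmeas f hf measurableSet_Ioi
  have hgen : mX = MeasurableSpace.generateFrom (generatePiSystem s0) := by
    rw [generateFrom_generatePiSystem_eq]; exact hgen0
  -- all sets of the π-system are approximable
  have happ_pi : ∀ t ∈ generatePiSystem s0, AppSeq 𝒟 t := by
    intro t ht
    induction ht with
    | base hs =>
      obtain ⟨f, hf, a, rfl⟩ := hs
      by_cases ha : 0 ≤ a
      · exact appSeq_Ioi 𝒟 hadd hsmul hnc hf ha
      · have hset : f ⁻¹' Set.Ioi a = (((-1 : ℝ) • f) ⁻¹' Set.Ici (-a))ᶜ := by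
          ext x
          simp only [Set.mem_preimage, Set.mem_Ioi, Set.mem_compl_iff, Set.mem_Ici,
            Pi.smul_apply, smul_eq_mul, neg_one_mul, not_le]
          constructor <;> intro h <;> linarith
        rw [hset]
        exact appSeq_compl 𝒟 hadd hsmul hnc hχ hχpos
          (appSeq_Ici 𝒟 hadd hsmul hnc (hsmul (-1) f hf) (by linarith))
    | inter hs ht hnon ihs iht => exact appSeq_inter 𝒟 hmul ihs iht
  -- indicators of all measurable sets lie in the closure
  have hmain : ∀ t : Set X, MeasurableSet t →
      ∀ hA : MeasurableSet t, (hindm t hA).toLp (indOne t) ∈ S.topologicalClosure := by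
    intro t ht
    refine MeasurableSpace.induction_on_inter
      (C := fun (A : Set X) _ => ∀ hA : MeasurableSet A,
        (hindm A hA).toLp (indOne A) ∈ S.topologicalClosure)
      hgen (isPiSystem_generatePiSystem s0) ?_ ?_ ?_ ?_ _ ht
    · -- empty set
      intro hA
      have h0 : (hindm ∅ hA).toLp (indOne ∅) = 0 := by
        apply Lp.ext
        filter_upwards [(hindm ∅ hA).coeFn_toLp, Lp.coeFn_zero ℝ 2 m] with x h1 h2
        rw [h1, h2, Pi.zero_apply, indOne_of_not_mem (Set.notMem_empty x)]
      rw [h0]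
      exact Submodule.zero_mem _
    · -- basic sets
      intro t' ht' hA
      exact happT t' hA (happ_pi t' ht')
    · -- complements
      intro t' hmt' ih hA
      have h1 := happT Set.univ MeasurableSet.univ
        (appSeq_univ 𝒟 hsmul hnc hχ hχpos)
      have h2 := ih hmt'
      have heq : (hindm t'ᶜ hA).toLp (indOne t'ᶜ) =
          (hindm Set.univ MeasurableSet.univ).toLp (indOne Set.univ) -
            (hindm t' hmt').toLp (indOne t') := by
        rw [← MemLp.toLp_sub]
        refine MemLp.toLp_congr _ _ (ae_of_all _ fun x => ?_)
        rw [Pi.sub_apply, indOne_of_mem (Set.mem_univ x)]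
        by_cases hx : x ∈ t'
        · rw [indOne_of_not_mem (by simpa using hx), indOne_of_mem hx]; ring
        · rw [indOne_of_mem (Set.mem_compl hx), indOne_of_not_mem hx]; ring
      rw [heq]
      exact Submodule.sub_mem _ h1 h2
    · -- countable disjoint unions
      intro fs hdisj hms hCs hA
      obtain ⟨g, hgdef⟩ : ∃ g : ℕ → X → ℝ,
          ∀ k x, g k x = ∑ i ∈ Finset.range k, indOne (fs i) x := ⟨_, fun _ _ => rfl⟩
      have hgm : ∀ k, MemLp (g k) 2 m := by
        intro k
        have hfe : g k = fun x => ∑ i ∈ Finset.range k, indOne (fs i) x :=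
          funext fun x => hgdef k x
        rw [hfe]
        exact memLp_finset_sum (Finset.range k) (fun i _ => hindm _ (hms i))
      have hval1 : ∀ k j x, j < k → x ∈ fs j → g k x = 1 := by
        intro k j x hjk hxj
        rw [hgdef]
        rw [Finset.sum_eq_single j
          (fun i _ hij => by
            have hxi : x ∉ fs i := fun hxi =>
              (Set.disjoint_left.mp (hdisj hij) hxi) hxj
            exact indOne_of_not_mem hxi)
          (fun hj => absurd (Finset.mem_range.mpr hjk) hj)]
        exact indOne_of_mem hxj
      have hval0 : ∀ k x, (∀ i, i < k → x ∉ fs i) → g k x = 0 := by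
        intro k x hx
        rw [hgdef]
        exact Finset.sum_eq_zero fun i hi =>
          indOne_of_not_mem (hx i (Finset.mem_range.mp hi))
      have hb : ∀ k x, |g k x| ≤ 1 := by
        intro k x
        by_cases hx : ∃ j, j < k ∧ x ∈ fs j
        · obtain ⟨j, hj, hxj⟩ := hx
          rw [hval1 k j x hj hxj]; norm_num
        · push_neg at hx
          rw [hval0 k x hx]; norm_num
      have ht' : ∀ x, Tendsto (fun k => g k x) atTop (𝓝 (indOne (⋃ i, fs i) x)) := by
        intro x
        by_cases hx : x ∈ ⋃ i, fs i
        · obtain ⟨j, hxj⟩ := Set.mem_iUnion.mp hx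
          rw [indOne_of_mem hx]
          apply tendsto_nhds_of_eventually_eq
          filter_upwards [eventually_ge_atTop (j + 1)] with k hk
          exact hval1 k j x (by omega) hxj
        · have hxall : ∀ i, x ∉ fs i := by
            intro i hi
            exact hx (Set.mem_iUnion.mpr ⟨i, hi⟩)
          rw [indOne_of_not_mem hx]
          apply tendsto_nhds_of_eventually_eq
          exact Eventually.of_forall fun k => hval0 k x (fun i _ => hxall i)
      have hTk : ∀ k, (hgm k).toLp (g k) ∈ S.topologicalClosure := by
        intro k
        induction k with
        | zero =>
          have h0 : (hgm 0).toLp (g 0) = 0 := by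
            apply Lp.ext
            filter_upwards [(hgm 0).coeFn_toLp, Lp.coeFn_zero ℝ 2 m] with x h1 h2
            rw [h1, h2, Pi.zero_apply, hgdef]
            simp
          rw [h0]
          exact Submodule.zero_mem _
        | succ k ihk =>
          have heq : (hgm (k + 1)).toLp (g (k + 1)) =
              (hgm k).toLp (g k) + (hindm _ (hms k)).toLp (indOne (fs k)) := by
            rw [← MemLp.toLp_add]
            refine MemLp.toLp_congr _ _ (ae_of_all _ fun x => ?_)
            rw [Pi.add_apply, hgdef 
              , hgdef]
            simp [Finset.sum_range_succ]
          rw [heq]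
          exact Submodule.add_mem _ ihk ((hCs k) (hms k))
      have htd := tendsto_toLp_of_bdd hgm (hindm _ hA) hb ht'
      exact (S.isClosed_topologicalClosure).mem_of_tendsto htd
        (Eventually.of_forall hTk)
  -- every element of L² lies in the closure
  have hall : ∀ u : Lp ℝ 2 m, u ∈ S.topologicalClosure := by
    refine Lp.induction ENNReal.ofNat_ne_top
      (fun u : Lp ℝ 2 m => u ∈ S.topologicalClosure) ?_ ?_ ?_
    · intro c s hs hμs
      have h1 := hmain s hs hs
      have heq : (Lp.simpleFunc.indicatorConst 2 hs hμs.ne c : Lp ℝ 2 m) =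
          c • ((hindm s hs).toLp (indOne s)) := by
        rw [Lp.simpleFunc.coe_indicatorConst]
        apply Lp.ext
        filter_upwards [indicatorConstLp_coeFn (p := 2) (μ := m) (hs := hs) (hμs := hμs.ne) (c := c),
          Lp.coeFn_smul c ((hindm s hs).toLp (indOne s)),
          (hindm s hs).coeFn_toLp] with x h1' h2' h3'
        rw [h1', h2', Pi.smul_apply, h3', smul_eq_mul]
        by_cases hx : x ∈ s
        · rw [Set.indicator_of_mem hx, indOne_of_mem hx]; ring
        · rw [Set.indicator_of_notMem hx, indOne_of_not_mem hx]; ring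
      rw [heq]
      exact Submodule.smul_mem _ c h1
    · intro f' g' hf' hg' _ hfm hgm
      exact Submodule.add_mem _ hfm hgm
    · exact S.isClosed_topologicalClosure
  -- conclude density
  refine dense_iff_closure_eq.mpr (Set.eq_univ_of_forall fun u => ?_)
  have h2 : u ∈ closure (S : Set (Lp ℝ 2 m)) := by
    rw [← Submodule.topologicalClosure_coe]
    exact hall u
  exact h2
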